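/- arXiv:2506.13710 — 4 statements merged into one kernel-verified Lean document; each statement's English description precedes it below -/
import Mathlib

section
/- Let f : ℝⁿ → ℝ be differentiable, H ⪰ 0 symmetric, g := ∇f(x) ≠ 0, and suppose 0 < γ ≤ γ(x), where γ(x) is the largest radius such that ‖∇f(x+h) − ∇f(x) − Hh‖_* ≤ ‖g‖_*‖h‖/γ(x) holds for all h with ‖h‖ ≤ γ(x) and ⟨∇²f(x)h,h⟩ + ⟨g,h⟩ ≤ 0. Let x⁺ := x − (H + (‖g‖_*/γ)B)^{-1} g. Then f(x) − f(x⁺) ≥ (γ/8)·‖∇f(x⁺)‖_*²/‖∇f(x)‖_*. -/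
open Matrix Topology Filter
open scoped RealInnerProductSpace

noncomputable def normB {n : ℕ} (B : Matrix (Fin n) (Fin n) ℝ)
    (h : EuclideanSpace ℝ (Fin n)) : ℝ :=
  Real.sqrt ⟪h, Matrix.toEuclideanLin B h⟫

noncomputable def dualNormB {n : ℕ} (B : Matrix (Fin n) (Fin n) ℝ)
    (s : EuclideanSpace ℝ (Fin n)) : ℝ :=
  Real.sqrt ⟪s, Matrix.toEuclideanLin B⁻¹ s⟫

open Matrix
open scoped RealInnerProductSpace

variable {n : ℕ}

noncomputable def qN (M : Matrix (Fin n) (Fin n) ℝ) (v : EuclideanSpace ℝ (Fin n)) : ℝ :=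
  Real.sqrt ⟪v, Matrix.toEuclideanLin M v⟫

lemma inner_toEuclideanLin (M : Matrix (Fin n) (Fin n) ℝ) (u v : EuclideanSpace ℝ (Fin n)) :
    ⟪u, Matrix.toEuclideanLin M v⟫ = (WithLp.equiv 2 _ u) ⬝ᵥ (M *ᵥ (WithLp.equiv 2 _ v)) := by
  simp [PiLp.inner_apply, Matrix.toEuclideanLin_apply, dotProduct, mul_comm]

lemma qf_pos {M : Matrix (Fin n) (Fin n) ℝ} (hM : M.PosDef) {v : EuclideanSpace ℝ (Fin n)}
    (hv : v ≠ 0) : 0 < ⟪v, Matrix.toEuclideanLin M v⟫ := by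
  rw [inner_toEuclideanLin]
  simpa using hM.dotProduct_mulVec_pos (x := WithLp.equiv 2 _ v) (by simpa using hv)

lemma qf_nonneg {M : Matrix (Fin n) (Fin n) ℝ} (hM : M.PosSemidef) (v : EuclideanSpace ℝ (Fin n)) :
    0 ≤ ⟪v, Matrix.toEuclideanLin M v⟫ := by
  rw [inner_toEuclideanLin]
  simpa using hM.dotProduct_mulVec_nonneg (WithLp.equiv 2 _ v)

lemma qf_symm {M : Matrix (Fin n) (Fin n) ℝ} (hM : M.IsHermitian)
    (u v : EuclideanSpace ℝ (Fin n)) :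
    ⟪u, Matrix.toEuclideanLin M v⟫ = ⟪Matrix.toEuclideanLin M u, v⟫ := by
  exact (Matrix.isHermitian_iff_isSymmetric.mp hM u v).symm

lemma qN_nonneg (M : Matrix (Fin n) (Fin n) ℝ) (v : EuclideanSpace ℝ (Fin n)) : 0 ≤ qN M v :=
  Real.sqrt_nonneg _

lemma qN_sq {M : Matrix (Fin n) (Fin n) ℝ} (hM : M.PosSemidef) (v : EuclideanSpace ℝ (Fin n)) :
    qN M v ^ 2 = ⟪v, Matrix.toEuclideanLin M v⟫ :=
  Real.sq_sqrt (qf_nonneg hM v)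

lemma qN_pos {M : Matrix (Fin n) (Fin n) ℝ} (hM : M.PosDef) {v : EuclideanSpace ℝ (Fin n)}
    (hv : v ≠ 0) : 0 < qN M v :=
  Real.sqrt_pos.mpr (qf_pos hM hv)

lemma toEuclideanLin_mul (A C : Matrix (Fin n) (Fin n) ℝ) (v : EuclideanSpace ℝ (Fin n)) :
    Matrix.toEuclideanLin (A * C) v = Matrix.toEuclideanLin A (Matrix.toEuclideanLin C v) := by
  simp [Matrix.toEuclideanLin_apply, Matrix.mulVec_mulVec]

lemma qN_smul {M : Matrix (Fin n) (Fin n) ℝ} (c : ℝ) (v : EuclideanSpace ℝ (Fin n)) :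
    qN M (c • v) = |c| * qN M v := by
  unfold qN
  rw [_root_.map_smul, real_inner_smul_left, real_inner_smul_right]
  have : c * (c * ⟪v, Matrix.toEuclideanLin M v⟫) = |c| ^ 2 * ⟪v, Matrix.toEuclideanLin M v⟫ := by
    rw [sq_abs]; ring
  rw [this, Real.sqrt_mul (sq_nonneg _), Real.sqrt_sq (abs_nonneg c)]

lemma posDef_smul {M : Matrix (Fin n) (Fin n) ℝ} (hM : M.PosDef) {c : ℝ} (hc : 0 < c) :
    (c • M).PosDef := by
  exact hM.smul hc

lemma qf_CS {M : Matrix (Fin n) (Fin n) ℝ} (hM : M.PosSemidef) (u v : EuclideanSpace ℝ (Fin n)) :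
    |⟪u, Matrix.toEuclideanLin M v⟫| ≤ qN M u * qN M v := by
  set T := Matrix.toEuclideanLin M with hT
  have hsym : ⟪v, T u⟫ = ⟪u, T v⟫ := by
    rw [real_inner_comm, ← qf_symm hM.1]
  have key : ∀ t : ℝ, 0 ≤ ⟪v, T v⟫ * (t * t) + (2 * ⟪u, T v⟫) * t + ⟪u, T u⟫ := by
    intro t
    have h0 := qf_nonneg hM (u + t • v)
    rw [← hT, map_add, _root_.map_smul, inner_add_left, inner_add_right, inner_add_right,
      real_inner_smul_left, real_inner_smul_right, real_inner_smul_left,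
      real_inner_smul_right] at h0
    rw [hsym] at h0
    nlinarith [h0]
  have hd := discrim_le_zero key
  rw [discrim] at hd
  have h1 := qf_nonneg hM u
  have h2 := qf_nonneg hM v
  have e1 : qN M u * qN M u = ⟪u, T u⟫ := Real.mul_self_sqrt h1
  have e2 : qN M v * qN M v = ⟪v, T v⟫ := Real.mul_self_sqrt h2
  have hnn : 0 ≤ qN M u * qN M v := mul_nonneg (qN_nonneg M u) (qN_nonneg M v)
  rw [abs_le]
  constructor <;> nlinarith [hd, e1, e2, hnn]

lemma qN_add_le {M : Matrix (Fin n) (Fin n) ℝ} (hM : M.PosSemidef)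
    (u v : EuclideanSpace ℝ (Fin n)) : qN M (u + v) ≤ qN M u + qN M v := by
  have hcs := (abs_le.mp (qf_CS hM u v)).2
  have hsym : ⟪v, Matrix.toEuclideanLin M u⟫ = ⟪u, Matrix.toEuclideanLin M v⟫ := by
    rw [real_inner_comm, ← qf_symm hM.1]
  have hexp : qN M (u + v) ^ 2 ≤ (qN M u + qN M v) ^ 2 := by
    rw [qN_sq hM, map_add, inner_add_left, inner_add_right, inner_add_right]
    have := qN_sq hM u
    have := qN_sq hM v
    nlinarith [hcs, hsym, qN_nonneg M u, qN_nonneg M v]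
  nlinarith [hexp, qN_nonneg M (u + v), add_nonneg (qN_nonneg M u) (qN_nonneg M v)]

lemma qN_le_of_sq_le_sq {a b : ℝ} (ha : 0 ≤ a) (hb : 0 ≤ b) (h : a ^ 2 ≤ b ^ 2) : a ≤ b := by
  nlinarith

lemma toEuclideanLin_inv_apply {M : Matrix (Fin n) (Fin n) ℝ} (hM : M.PosDef)
    (v : EuclideanSpace ℝ (Fin n)) :
    Matrix.toEuclideanLin M⁻¹ (Matrix.toEuclideanLin M v) = v := by
  rw [← toEuclideanLin_mul, Matrix.nonsing_inv_mul _ hM.det_pos.ne'.isUnit]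
  simp [Matrix.toEuclideanLin_apply]

lemma qN_inv_map {M : Matrix (Fin n) (Fin n) ℝ} (hM : M.PosDef)
    (v : EuclideanSpace ℝ (Fin n)) :
    qN M⁻¹ (Matrix.toEuclideanLin M v) = qN M v := by
  unfold qN
  rw [toEuclideanLin_inv_apply hM, real_inner_comm, qf_symm hM.1]

lemma qf_CS_mixed {M : Matrix (Fin n) (Fin n) ℝ} (hM : M.PosDef)
    (u v : EuclideanSpace ℝ (Fin n)) : ⟪u, v⟫ ≤ qN M⁻¹ u * qN M v := by
  have h := (abs_le.mp (qf_CS hM.inv.posSemidef u (Matrix.toEuclideanLin M v))).2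
  rw [toEuclideanLin_inv_apply hM, qN_inv_map hM] at h
  exact h


lemma qN_neg (M : Matrix (Fin n) (Fin n) ℝ) (v : EuclideanSpace ℝ (Fin n)) :
    qN M (-v) = qN M v := by
  rw [show -v = (-1 : ℝ) • v by simp, qN_smul]; simp

lemma qN_continuous (M : Matrix (Fin n) (Fin n) ℝ) : Continuous (qN M) :=
  Real.continuous_sqrt.comp (continuous_id.inner
    (LinearMap.continuous_of_finiteDimensional (Matrix.toEuclideanLin M)))

lemma fderiv_apply_inner (f : EuclideanSpace ℝ (Fin n) → ℝ) (y v : EuclideanSpace ℝ (Fin n)) :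
    fderiv ℝ f y v = ⟪gradient f y, v⟫ := by
  conv_lhs => rw [← (InnerProductSpace.toDual ℝ _).apply_symm_apply (fderiv ℝ f y)]
  rfl

lemma gradient_continuous' {f : EuclideanSpace ℝ (Fin n) → ℝ} (hf : ContDiff ℝ 2 f) :
    Continuous (gradient f) :=
  (InnerProductSpace.toDual ℝ _).symm.continuous.comp (hf.continuous_fderiv (by simp))

lemma gradient_differentiableAt' {f : EuclideanSpace ℝ (Fin n) → ℝ} (hf : ContDiff ℝ 2 f)
    (x : EuclideanSpace ℝ (Fin n)) : DifferentiableAt ℝ (gradient f) x := by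
  have h : ContDiff ℝ 1 (fderiv ℝ f) := hf.fderiv_right (by norm_num)
  exact ((InnerProductSpace.toDual ℝ _).symm.differentiable.differentiableAt).comp x
    ((h.differentiable (by simp)) x)

set_option maxHeartbeats 2000000 in
theorem regularized_newton_step_progress {n : ℕ}
    (f : EuclideanSpace ℝ (Fin n) → ℝ) (hf : ContDiff ℝ 2 f)
    (H B : Matrix (Fin n) (Fin n) ℝ) (hH : H.PosSemidef) (hB : B.PosDef)
    (x : EuclideanSpace ℝ (Fin n)) (hg : gradient f x ≠ 0)
    (γ : ℝ) (hγ : 0 < γ)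
    (hsmooth : ∀ h : EuclideanSpace ℝ (Fin n),
      normB B h ≤ γ →
      ⟪fderiv ℝ (gradient f) x h, h⟫ + ⟪gradient f x, h⟫ ≤ 0 →
      dualNormB B (gradient f (x + h) - gradient f x - Matrix.toEuclideanLin H h)
        ≤ dualNormB B (gradient f x) * normB B h / γ)
    (xp : EuclideanSpace ℝ (Fin n))
    (hxp : xp = x - Matrix.toEuclideanLin
        (H + (dualNormB B (gradient f x) / γ) • B)⁻¹ (gradient f x)) :
    f x - f xp ≥ γ / 8 * (dualNormB B (gradient f xp)) ^ 2 / dualNormB B (gradient f x) := by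
  classical
  set g : EuclideanSpace ℝ (Fin n) := gradient f x with hgdef
  have hnormB : ∀ v : EuclideanSpace ℝ (Fin n), normB B v = qN B v := fun _ => rfl
  have hdualB : ∀ v : EuclideanSpace ℝ (Fin n), dualNormB B v = qN B⁻¹ v := fun _ => rfl
  set dg : ℝ := dualNormB B g with hdg
  have hdgpos : 0 < dg := by
    rw [hdg, hdualB]; exact qN_pos hB.inv hg
  set lam : ℝ := dg / γ with hlam
  have hlampos : 0 < lam := div_pos hdgpos hγ
  set A : Matrix (Fin n) (Fin n) ℝ := H + lam • B with hA
  have hApos : A.PosDef := Matrix.PosDef.posSemidef_add hH (posDef_smul hB hlampos)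
  set s : EuclideanSpace ℝ (Fin n) := Matrix.toEuclideanLin A⁻¹ g with hs
  have hAs : Matrix.toEuclideanLin A s = g := by
    rw [hs, ← toEuclideanLin_mul, Matrix.mul_nonsing_inv _ hApos.det_pos.ne'.isUnit]
    simp [Matrix.toEuclideanLin_apply]
  have hxps : xp = x - s := hxp
  have hsne : s ≠ 0 := by
    intro h0
    apply hg
    rw [← hAs, h0, map_zero]
  -- decomposition of g
  have hgdecomp : Matrix.toEuclideanLin H s + lam • Matrix.toEuclideanLin B s = g := by
    rw [← hAs, hA, map_add, _root_.map_smul]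
    rfl
  set ns : ℝ := qN B s with hns
  have hnspos : 0 < ns := qN_pos hB hsne
  set p : ℝ := ⟪g, s⟫ with hp
  have hHs0 : 0 ≤ ⟪s, Matrix.toEuclideanLin H s⟫ := qf_nonneg hH s
  have hpdecomp : p = ⟪s, Matrix.toEuclideanLin H s⟫ + lam * ns ^ 2 := by
    have e := qN_sq hB.posSemidef s
    rw [real_inner_comm] at e
    rw [hp, ← hgdecomp, inner_add_left, real_inner_smul_left, e,
      real_inner_comm s ((Matrix.toEuclideanLin H) s)]
  have hppos : 0 < p := by
    rw [hpdecomp]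
    have : 0 < lam * ns ^ 2 := by positivity
    linarith
  -- step length bound
  have hnsle : ns ≤ γ := by
    have hcs : p ≤ dg * ns := by
      rw [hp, hdg, hdualB]
      exact qf_CS_mixed hB g s
    have h1 : lam * ns ^ 2 ≤ lam * γ * ns := by
      have : lam * γ = dg := by rw [hlam, div_mul_cancel₀ _ hγ.ne']
      rw [this]
      rw [hpdecomp] at hcs
      linarith
    nlinarith [hnspos, hlampos, mul_pos hlampos hnspos]
  -- notation for Hessian
  set Q : EuclideanSpace ℝ (Fin n) →L[ℝ] EuclideanSpace ℝ (Fin n) := fderiv ℝ (gradient f) x with hQ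
  clear_value g dg lam A s ns p Q
  -- second-order bound on the step
  have hQs : ⟪Q s, s⟫ ≤ p := by
    have hgd : DifferentiableAt ℝ (gradient f) x := gradient_differentiableAt' hf x
    have hQat : HasFDerivAt (gradient f) Q x := by rw [hQ]; exact hgd.hasFDerivAt
    set G : ℝ → EuclideanSpace ℝ (Fin n) :=
      fun t => gradient f (x + (-t) • s) + t • Matrix.toEuclideanLin H s with hGdef
    have hline : HasDerivAt (fun t : ℝ => x + (-t) • s) (-s) 0 := by
      simpa using (((hasDerivAt_id (0:ℝ)).neg).smul_const s).const_add x
    have hQat' : HasFDerivAt (gradient f) Q (x + (-(0:ℝ)) • s) := by simpa using hQat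
    have h1 : HasDerivAt (fun t : ℝ => gradient f (x + (-t) • s)) (Q (-s)) 0 :=
      hQat'.comp_hasDerivAt (f := fun t : ℝ => x + (-t) • s) 0 hline
    have h2 : HasDerivAt (fun t : ℝ => t • Matrix.toEuclideanLin H s)
        (Matrix.toEuclideanLin H s) 0 := by
      simpa using (hasDerivAt_id (0:ℝ)).smul_const (Matrix.toEuclideanLin H s)
    have hG : HasDerivAt G (Q (-s) + Matrix.toEuclideanLin H s) 0 := h1.add h2
    have hslope := hasDerivAt_iff_tendsto_slope.mp hG
    have hmono : 𝓝[>] (0:ℝ) ≤ 𝓝[≠] (0:ℝ) := nhdsWithin_mono 0 (fun y hy => ne_of_gt hy)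
    have hslope' : Filter.Tendsto (fun t => qN B⁻¹ (slope G 0 t)) (𝓝[>] (0:ℝ))
        (𝓝 (qN B⁻¹ (Q (-s) + Matrix.toEuclideanLin H s))) :=
      ((qN_continuous B⁻¹).continuousAt.tendsto).comp (hslope.mono_left hmono)
    set q : ℝ := ⟪Q s, s⟫ with hqdef
    clear_value q
    set t0 : ℝ := min 1 (p / (|q| + 1)) with ht0def
    have ht0pos : 0 < t0 := lt_min one_pos (div_pos hppos (by positivity))
    have hev : ∀ᶠ t in 𝓝[>] (0:ℝ), qN B⁻¹ (slope G 0 t) ≤ lam * ns := by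
      filter_upwards [Ioo_mem_nhdsGT ht0pos] with t ht
      obtain ⟨ht1, ht2⟩ := ht
      have htle1 : t ≤ 1 := le_trans ht2.le (min_le_left _ _)
      have hnorm : normB B ((-t) • s) = t * ns := by
        rw [hnormB, qN_smul, abs_neg, abs_of_pos ht1, hns]
      have hcnorm : normB B ((-t) • s) ≤ γ := by
        rw [hnorm]
        nlinarith [mul_le_mul_of_nonneg_right htle1 hnspos.le, hnsle]
      have hquad : ⟪Q ((-t) • s), (-t) • s⟫ + ⟪g, (-t) • s⟫ ≤ 0 := by
        rw [_root_.map_smul, real_inner_smul_left, real_inner_smul_right,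
          real_inner_smul_right, ← hp, ← hqdef]
        have h4 : t < p / (|q| + 1) := lt_of_lt_of_le ht2 (min_le_right _ _)
        rw [lt_div_iff₀ (by positivity)] at h4
        have h3 : t * |q| ≤ p := by nlinarith [abs_nonneg q, ht1.le]
        nlinarith [mul_le_mul_of_nonneg_left h3 ht1.le,
          mul_nonneg (mul_nonneg ht1.le ht1.le) (sub_nonneg.mpr (le_abs_self q))]
      have hsm := hsmooth ((-t) • s) hcnorm hquad
      rw [hnorm, hdualB] at hsm
      have hG0 : G 0 = g := by simp [hGdef, ← hgdef]
      have hslope_eq : slope G 0 t = t⁻¹ •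
          (gradient f (x + (-t) • s) - g - Matrix.toEuclideanLin H ((-t) • s)) := by
        rw [slope_def_module, hG0]
        congr 1
        · simp
        · simp only [hGdef, _root_.map_smul]
          module
      rw [hslope_eq, qN_smul, abs_of_pos (inv_pos.mpr ht1)]
      calc t⁻¹ * qN B⁻¹ (gradient f (x + (-t) • s) - g - Matrix.toEuclideanLin H ((-t) • s))
          ≤ t⁻¹ * (dg * (t * ns) / γ) :=
            mul_le_mul_of_nonneg_left hsm (inv_nonneg.mpr ht1.le)
        _ = lam * ns := by
            rw [hlam]; field_simp
    have hlim := le_of_tendsto hslope' hev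
    have hqneg : qN B⁻¹ (Q s - Matrix.toEuclideanLin H s) ≤ lam * ns := by
      have he : Q (-s) + Matrix.toEuclideanLin H s = -(Q s - Matrix.toEuclideanLin H s) := by
        rw [map_neg]; abel
      rw [he, qN_neg] at hlim; exact hlim
    have hcs2 : ⟪Q s - Matrix.toEuclideanLin H s, s⟫
        ≤ qN B⁻¹ (Q s - Matrix.toEuclideanLin H s) * ns := by
      have h5 := qf_CS_mixed hB (Q s - Matrix.toEuclideanLin H s) s
      rw [← hns] at h5; exact h5
    have hsplit : ⟪Q s, s⟫ = ⟪Q s - Matrix.toEuclideanLin H s, s⟫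
        + ⟪Matrix.toEuclideanLin H s, s⟫ := by
      rw [← inner_add_left]; congr 1; abel
    rw [hqdef, hpdecomp, hsplit, real_inner_comm ((Matrix.toEuclideanLin H) s) s]
    nlinarith [hcs2, hqneg, mul_le_mul_of_nonneg_right hqneg hnspos.le]
  -- conditions of hsmooth hold for h = -t • s, t ∈ [0,1]
  have hcond : ∀ t : ℝ, 0 ≤ t → t ≤ 1 →
      dualNormB B (gradient f (x + (-t) • s) - g - Matrix.toEuclideanLin H ((-t) • s))
        ≤ lam * (t * ns) := by
    intro t ht0 ht1
    have hnorm : normB B ((-t) • s) = t * ns := by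
      rw [hnormB, qN_smul, abs_neg, abs_of_nonneg ht0, hns]
    have hquad : ⟪Q ((-t) • s), (-t) • s⟫ + ⟪g, (-t) • s⟫ ≤ 0 := by
      rw [_root_.map_smul, real_inner_smul_left, real_inner_smul_right, real_inner_smul_right, ← hp]
      have hQss : ⟪Q s, s⟫ ≤ p := hQs
      nlinarith [mul_nonneg (mul_nonneg ht0 ht0) (sub_nonneg.mpr hQss),
        mul_nonneg (mul_nonneg ht0 (sub_nonneg.mpr ht1)) hppos.le]
    have := hsmooth ((-t) • s) (by rw [hnorm]; nlinarith [hnspos]) hquad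
    rw [hnorm] at this
    calc dualNormB B (gradient f (x + (-t) • s) - g - Matrix.toEuclideanLin H ((-t) • s))
        ≤ dg * (t * ns) / γ := this
      _ = lam * (t * ns) := by rw [hlam]; ring
  -- lower bound for the decrease
  have hdecrease : f x - f xp ≥ p - (⟪s, Matrix.toEuclideanLin H s⟫ + lam * ns ^ 2) / 2 := by
    set c : ℝ := ⟪s, Matrix.toEuclideanLin H s⟫ + lam * ns ^ 2 with hc
    clear_value c
    have hfd : Differentiable ℝ f := hf.differentiable (by simp)
    have hderiv : ∀ t : ℝ, HasDerivAt (fun u : ℝ => f (x + (-u) • s))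
        (-⟪gradient f (x + (-t) • s), s⟫) t := by
      intro t
      have hline : HasDerivAt (fun u : ℝ => x + (-u) • s) (-s) t := by
        simpa using (((hasDerivAt_id t).neg).smul_const s).const_add x
      have hF : HasFDerivAt f (fderiv ℝ f (x + (-t) • s)) (x + (-t) • s) :=
        (hfd _).hasFDerivAt
      have hcomp := hF.comp_hasDerivAt t hline
      have he : fderiv ℝ f (x + (-t) • s) (-s) = -⟪gradient f (x + (-t) • s), s⟫ := by
        rw [fderiv_apply_inner, inner_neg_right]
      rwa [he] at hcomp
    have hcont : Continuous fun t : ℝ => ⟪gradient f (x + (-t) • s), s⟫ :=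
      ((gradient_continuous' hf).comp (continuous_const.add ((continuous_id.neg).smul continuous_const))).inner continuous_const
    have hftc := intervalIntegral.integral_eq_sub_of_hasDerivAt
      (f := fun u : ℝ => f (x + (-u) • s)) (f' := fun t => -⟪gradient f (x + (-t) • s), s⟫)
      (fun t _ => hderiv t) ((hcont.neg).intervalIntegrable 0 1)
    have he1 : x + (-(1:ℝ)) • s = xp := by rw [hxps]; module
    have he0 : x + (-(0:ℝ)) • s = x := by module
    simp only [intervalIntegral.integral_neg, he1, he0] at hftc
    have hint : f x - f xp = ∫ t in (0:ℝ)..1, ⟪gradient f (x + (-t) • s), s⟫ := by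
      linarith [hftc]
    have hpt : ∀ t ∈ Set.Icc (0:ℝ) 1, p - t * c ≤ ⟪gradient f (x + (-t) • s), s⟫ := by
      rintro t ⟨ht0, ht1⟩
      have hr := hcond t ht0 ht1
      rw [hdualB] at hr
      set r := gradient f (x + (-t) • s) - g - Matrix.toEuclideanLin H ((-t) • s) with hrdef
      clear_value r
      have hrs : -(lam * (t * ns) * ns) ≤ ⟪r, s⟫ := by
        have h1 : ⟪-r, s⟫ ≤ qN B⁻¹ (-r) * qN B s := qf_CS_mixed hB (-r) s
        rw [qN_neg, inner_neg_left, ← hns] at h1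
        nlinarith [mul_le_mul_of_nonneg_right hr hnspos.le]
      have hge : gradient f (x + (-t) • s) = r + g + Matrix.toEuclideanLin H ((-t) • s) := by
        rw [hrdef]; abel
      rw [hge, inner_add_left, inner_add_left, _root_.map_smul, real_inner_smul_left, ← hp]
      have hcomm : ⟪(Matrix.toEuclideanLin H) s, s⟫ = ⟪s, (Matrix.toEuclideanLin H) s⟫ :=
        real_inner_comm _ _
      nlinarith [hrs, hcomm, hc]
    have hi1 : IntervalIntegrable (fun _ : ℝ => p) MeasureTheory.volume 0 1 :=
      intervalIntegrable_const
    have hi2 : IntervalIntegrable (fun t : ℝ => t * c) MeasureTheory.volume 0 1 :=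
      (continuous_id.mul continuous_const).intervalIntegrable 0 1
    have hi3 : IntervalIntegrable (fun t : ℝ => p - t * c) MeasureTheory.volume 0 1 :=
      (continuous_const.sub (continuous_id.mul continuous_const)).intervalIntegrable 0 1
    have hmono := intervalIntegral.integral_mono_on (μ := MeasureTheory.volume) zero_le_one
      hi3 (hcont.intervalIntegrable 0 1) hpt
    have hval : ∫ t in (0:ℝ)..1, (p - t * c) = p - c / 2 := by
      rw [intervalIntegral.integral_sub hi1 hi2,
        intervalIntegral.integral_mul_const, integral_id]
      norm_num
      ring
    rw [ge_iff_le, hint]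
    rw [hval] at hmono
    exact hmono
  have hdec2 : f x - f xp ≥ lam * ns ^ 2 / 2 := by
    rw [hpdecomp] at hdecrease
    linarith
  -- gradient bound at xp
  have hgxp : dualNormB B (gradient f xp) ≤ 2 * lam * ns := by
    have h1 := hcond 1 zero_le_one le_rfl
    rw [neg_smul, one_smul] at h1
    have hxpx : x + -s = xp := by rw [hxps]; abel
    rw [hxpx] at h1
    have hsplit : gradient f xp = (gradient f xp - g - Matrix.toEuclideanLin H (-s))
        + lam • Matrix.toEuclideanLin B s := by
      rw [map_neg, ← hgdecomp]
      abel
    rw [hsplit, hdualB]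
    calc qN B⁻¹ ((gradient f xp - g - Matrix.toEuclideanLin H (-s))
            + lam • Matrix.toEuclideanLin B s)
        ≤ qN B⁻¹ (gradient f xp - g - Matrix.toEuclideanLin H (-s))
            + qN B⁻¹ (lam • Matrix.toEuclideanLin B s) := qN_add_le hB.inv.posSemidef _ _
      _ ≤ lam * (1 * ns) + lam * ns := by
          have h2 : qN B⁻¹ (lam • Matrix.toEuclideanLin B s) = lam * ns := by
            rw [qN_smul, abs_of_pos hlampos, qN_inv_map hB, hns]
          rw [h2]
          exact add_le_add (by rw [← hdualB]; exact h1) le_rfl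
      _ = 2 * lam * ns := by ring
  -- final arithmetic
  have hdgval : dg = lam * γ := by rw [hlam, div_mul_cancel₀ _ hγ.ne']
  have hxpnn : 0 ≤ dualNormB B (gradient f xp) := by rw [hdualB]; exact qN_nonneg _ _
  have hsq : (dualNormB B (gradient f xp)) ^ 2 ≤ 4 * lam ^ 2 * ns ^ 2 := by nlinarith [hgxp, hxpnn]
  have : γ / 8 * (dualNormB B (gradient f xp)) ^ 2 / dg ≤ lam * ns ^ 2 / 2 := by
    rw [div_le_div_iff₀ hdgpos (by norm_num : (0:ℝ) < 2), hdgval]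
    nlinarith [hγ, hsq]
  linarith [hdec2, this]
end

section
/- Let u : ℝⁿ → ℝᵈ be C², G ∈ ℝ^{d×d} symmetric positive definite, p ≥ 2, and f(x) := (1/p)⟨Gu(x),u(x)⟩^{p/2}. Define H(x) := ‖u(x)‖^{p−2}∇u(x)ᵀG∇u(x) + ((p−2)/‖u(x)‖^p)∇f(x)∇f(x)ᵀ where ‖u(x)‖ := ⟨Gu(x),u(x)⟩^{1/2}. If ‖∇²u(x)‖ ≤ ξ₁ (in the appropriate induced norm), then ‖∇²f(x) − H(x)‖ ≤ ξ₁‖u(x)‖^{p−1}. If additionally ∇u(x)B^{-1}∇u(x)ᵀ ⪰ μG^{-1} for some μ > 0, then ‖∇²f(x) − H(x)‖ ≤ (ξ₁/√μ)‖∇f(x)‖_*. -/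
open Matrix
open scoped RealInnerProductSpace

section Aux
variable {n d : ℕ}

noncomputable def GLc {d : ℕ} (G : Matrix (Fin d) (Fin d) ℝ) :
    EuclideanSpace ℝ (Fin d) →L[ℝ] EuclideanSpace ℝ (Fin d) :=
  LinearMap.toContinuousLinearMap (Matrix.toEuclideanLin G)

lemma GLc_apply (G : Matrix (Fin d) (Fin d) ℝ) (v : EuclideanSpace ℝ (Fin d)) :
    GLc G v = Matrix.toEuclideanLin G v := rfl

noncomputable def innerR (d : ℕ) :
    EuclideanSpace ℝ (Fin d) →L[ℝ] EuclideanSpace ℝ (Fin d) →L[ℝ] ℝ := innerSL ℝ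

lemma innerR_apply (v w : EuclideanSpace ℝ (Fin d)) : innerR d v w = ⟪v, w⟫ := rfl

lemma inner_GLc_nonneg {G : Matrix (Fin d) (Fin d) ℝ} (hG : G.PosDef)
    (v : EuclideanSpace ℝ (Fin d)) : 0 ≤ ⟪v, GLc G v⟫ := by
  have := hG.posSemidef.re_dotProduct_nonneg (x := (WithLp.equiv 2 _) v)
  simpa [EuclideanSpace.inner_eq_star_dotProduct, GLc_apply, Matrix.toEuclideanLin_apply,
    dotProduct, mul_comm] using this

lemma inner_GLc_eq_zero {G : Matrix (Fin d) (Fin d) ℝ} (hG : G.PosDef)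
    {v : EuclideanSpace ℝ (Fin d)} (h : ⟪v, GLc G v⟫ = 0) : v = 0 := by
  by_contra hv
  have := hG.re_dotProduct_pos (x := (WithLp.equiv 2 _) v) (by simpa using hv)
  rw [show (star ((WithLp.equiv 2 _) v) ⬝ᵥ G *ᵥ (WithLp.equiv 2 _) v) = ⟪v, GLc G v⟫ from ?_] at this
  · simp [h] at this
  · simp [EuclideanSpace.inner_eq_star_dotProduct, GLc_apply, Matrix.toEuclideanLin_apply,
      dotProduct, mul_comm]

lemma GLc_symm {G : Matrix (Fin d) (Fin d) ℝ} (hG : G.IsSymm)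
    (v w : EuclideanSpace ℝ (Fin d)) : ⟪GLc G v, w⟫ = ⟪v, GLc G w⟫ := by
  have hH : G.IsHermitian := by
    rwa [Matrix.IsHermitian, Matrix.conjTranspose, Matrix.IsSymm] at *
  exact (Matrix.isHermitian_iff_isSymmetric.mp hH) v w

variable (G : Matrix (Fin d) (Fin d) ℝ)
    (u : EuclideanSpace ℝ (Fin n) → EuclideanSpace ℝ (Fin d))

noncomputable def qfun : EuclideanSpace ℝ (Fin n) → ℝ :=
  fun y => ⟪u y, GLc G (u y)⟫

noncomputable def qd (y : EuclideanSpace ℝ (Fin n)) :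
    EuclideanSpace ℝ (Fin n) →L[ℝ] ℝ :=
  (2 : ℝ) • ((innerR d (GLc G (u y))).comp (fderiv ℝ u y))

lemma qd_apply (y h : EuclideanSpace ℝ (Fin n)) :
    qd G u y h = 2 * ⟪GLc G (u y), fderiv ℝ u y h⟫ := by
  simp only [qd, ContinuousLinearMap.smul_apply, ContinuousLinearMap.comp_apply,
    innerR_apply, smul_eq_mul]

variable {G u}
variable (hGs : G.IsSymm) (hu : ContDiff ℝ 2 u)

include hu in
lemma contDiff_qfun : ContDiff ℝ 2 (qfun G u) :=
  ContDiff.inner ℝ hu ((GLc G).contDiff.comp hu)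

include hGs hu in
lemma hasFDerivAt_qfun (y : EuclideanSpace ℝ (Fin n)) :
    HasFDerivAt (qfun G u) (qd G u y) y := by
  have hA : HasFDerivAt u (fderiv ℝ u y) y :=
    (hu.differentiable (by norm_num)).differentiableAt.hasFDerivAt
  have hGu : HasFDerivAt (fun z => GLc G (u z)) ((GLc G).comp (fderiv ℝ u y)) y :=
    (GLc G).hasFDerivAt.comp y hA
  have h := (HasFDerivAt.inner ℝ hA hGu :
    HasFDerivAt (fun t => ⟪u t, GLc G (u t)⟫) _ y)
  refine h.congr_fderiv ?_
  ext k
  simp only [qd_apply, fderivInnerCLM_apply, ContinuousLinearMap.comp_apply,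
    ContinuousLinearMap.prod_apply]
  rw [← GLc_symm hGs, real_inner_comm ((fderiv ℝ u y) k) ((GLc G) (u y))]
  ring

include hGs hu in
lemma fderiv_qfun : fderiv ℝ (qfun G u) = qd G u :=
  funext fun y => (hasFDerivAt_qfun hGs hu y).fderiv

variable (G u) in
noncomputable def qdd (x : EuclideanSpace ℝ (Fin n)) :
    EuclideanSpace ℝ (Fin n) →L[ℝ] EuclideanSpace ℝ (Fin n) →L[ℝ] ℝ :=
  (2 : ℝ) •
    (((ContinuousLinearMap.compL ℝ (EuclideanSpace ℝ (Fin n))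
        (EuclideanSpace ℝ (Fin d)) ℝ (innerR d (GLc G (u x)))).comp
          (fderiv ℝ (fderiv ℝ u) x)) +
      ((ContinuousLinearMap.compL ℝ (EuclideanSpace ℝ (Fin n))
        (EuclideanSpace ℝ (Fin d)) ℝ).flip (fderiv ℝ u x)).comp
          (((innerR d).comp (GLc G)).comp (fderiv ℝ u x)))

lemma qdd_apply (x h k : EuclideanSpace ℝ (Fin n)) :
    qdd G u x h k = 2 * (⟪GLc G (u x), fderiv ℝ (fderiv ℝ u) x h k⟫ +
      ⟪GLc G (fderiv ℝ u x h), fderiv ℝ u x k⟫) := by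
  simp only [qdd, ContinuousLinearMap.smul_apply, ContinuousLinearMap.add_apply,
    ContinuousLinearMap.comp_apply, ContinuousLinearMap.compL_apply,
    ContinuousLinearMap.flip_apply, innerR_apply, smul_eq_mul]

include hu in
lemma hasFDerivAt_qd (x : EuclideanSpace ℝ (Fin n)) :
    HasFDerivAt (qd G u) (qdd G u x) x := by
  have hA : HasFDerivAt u (fderiv ℝ u x) x :=
    (hu.differentiable (by norm_num)).differentiableAt.hasFDerivAt
  have hc : HasFDerivAt (fun y => innerR d (GLc G (u y)))
      (((innerR d).comp (GLc G)).comp (fderiv ℝ u x)) x :=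
    ((innerR d).comp (GLc G)).hasFDerivAt.comp x hA
  have hd : HasFDerivAt (fun y => fderiv ℝ u y) (fderiv ℝ (fderiv ℝ u) x) x := by
    have : ContDiff ℝ 1 (fderiv ℝ u) := hu.fderiv_right (by norm_num)
    exact (this.differentiable one_ne_zero).differentiableAt.hasFDerivAt
  exact (hc.clm_comp hd).const_smul (2 : ℝ)

variable (p : ℝ)

variable (G u) in
noncomputable def gfun (y : EuclideanSpace ℝ (Fin n)) :
    EuclideanSpace ℝ (Fin n) →L[ℝ] ℝ :=
  ((1 / 2) * qfun G u y ^ (p / 2 - 1)) • qd G u y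

lemma gfun_apply (y h : EuclideanSpace ℝ (Fin n)) :
    gfun G u p y h = qfun G u y ^ (p / 2 - 1) * ⟪GLc G (u y), fderiv ℝ u y h⟫ := by
  simp only [gfun, ContinuousLinearMap.smul_apply, qd_apply, smul_eq_mul]
  ring

variable {p} {f : EuclideanSpace ℝ (Fin n) → ℝ}
variable (hp : 2 ≤ p) (hf : f = fun y => 1 / p * qfun G u y ^ (p / 2))

include hGs hu hp hf in
lemma hasFDerivAt_f (y : EuclideanSpace ℝ (Fin n)) :
    HasFDerivAt f (gfun G u p y) y := by
  have h1 : HasFDerivAt (fun z => qfun G u z ^ (p / 2))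
      ((p / 2 * qfun G u y ^ (p / 2 - 1)) • qd G u y) y :=
    (hasFDerivAt_qfun hGs hu y).rpow_const (Or.inr (by linarith))
  have h2 := h1.const_mul (1 / p)
  rw [hf]
  refine h2.congr_fderiv ?_
  rw [gfun, smul_smul]
  congr 1
  have hp0 : p ≠ 0 := by linarith
  field_simp

include hGs hu hp hf in
lemma fderiv_f : fderiv ℝ f = gfun G u p :=
  funext fun y => (hasFDerivAt_f hGs hu hp hf y).fderiv

include hGs hu in
omit hp in
lemma hasFDerivAt_gfun {x : EuclideanSpace ℝ (Fin n)}
    (hx : 0 < qfun G u x ∨ p = 2) :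
    HasFDerivAt (gfun G u p)
      (((1 / 2) * qfun G u x ^ (p / 2 - 1)) • qdd G u x +
        (((1 / 2) * (p / 2 - 1) * qfun G u x ^ (p / 2 - 2)) • qd G u x).smulRight
          (qd G u x)) x := by
  have hc : HasFDerivAt (fun y => (1 / 2 : ℝ) * qfun G u y ^ (p / 2 - 1))
      (((1 / 2) * (p / 2 - 1) * qfun G u x ^ (p / 2 - 2)) • qd G u x) x := by
    rcases hx with hx | hx
    · have h1 : HasFDerivAt (fun y => qfun G u y ^ (p / 2 - 1))
          (((p / 2 - 1) * qfun G u x ^ (p / 2 - 1 - 1)) • qd G u x) x :=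
        (hasFDerivAt_qfun hGs hu x).rpow_const (Or.inl (ne_of_gt hx))
      have h2 := h1.const_mul (1 / 2)
      refine h2.congr_fderiv ?_
      rw [smul_smul]
      congr 1
      rw [show p / 2 - 1 - 1 = p / 2 - 2 by ring]
      ring
    · have he : p / 2 - 1 = 0 := by rw [hx]; norm_num
      have hfun : (fun y => (1 / 2 : ℝ) * qfun G u y ^ (p / 2 - 1)) =
          fun _ => (1 / 2 : ℝ) := by
        funext y; rw [he, Real.rpow_zero, mul_one]
      rw [hfun]
      have : ((1 / 2) * (p / 2 - 1) * qfun G u x ^ (p / 2 - 2)) • qd G u x = 0 := by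
        rw [he, mul_zero, zero_mul, zero_smul]
      rw [this]
      exact hasFDerivAt_const _ _
  exact hc.smul (hasFDerivAt_qd hu x)

include hGs hu hp hf in
lemma second_fderiv_f_apply {x : EuclideanSpace ℝ (Fin n)}
    (hx : 0 < qfun G u x ∨ p = 2) (h : EuclideanSpace ℝ (Fin n)) :
    iteratedFDeriv ℝ 2 f x ![h, h] =
      (p - 2) * qfun G u x ^ (p / 2 - 2) * ⟪GLc G (u x), fderiv ℝ u x h⟫ ^ 2 +
        qfun G u x ^ (p / 2 - 1) * ⟪GLc G (fderiv ℝ u x h), fderiv ℝ u x h⟫ +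
        qfun G u x ^ (p / 2 - 1) * ⟪GLc G (u x), iteratedFDeriv ℝ 2 u x ![h, h]⟫ := by
  rw [iteratedFDeriv_two_apply]
  rw [iteratedFDeriv_two_apply u x ![h, h]]
  simp only [Matrix.cons_val_zero, Matrix.cons_val_one, Matrix.head_cons]
  rw [fderiv_f hGs hu hp hf, (hasFDerivAt_gfun hGs hu hx).fderiv]
  simp only [ContinuousLinearMap.add_apply, ContinuousLinearMap.smul_apply,
    ContinuousLinearMap.smulRight_apply, qdd_apply, qd_apply, smul_eq_mul]
  ring


include hGs hu in
omit hp hf in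
lemma hasFDerivAt_gfun_zero {x : EuclideanSpace ℝ (Fin n)} (hGpd : G.PosDef)
    (hqx : qfun G u x = 0) (hp2 : 2 < p) :
    HasFDerivAt (gfun G u p)
      (0 : EuclideanSpace ℝ (Fin n) →L[ℝ] (EuclideanSpace ℝ (Fin n) →L[ℝ] ℝ)) x := by
  have hux : u x = 0 := inner_GLc_eq_zero hGpd hqx
  have hqdx : qd G u x = 0 := by
    ext k; rw [qd_apply, hux]; simp
  have hgx : gfun G u p x = 0 := by rw [gfun, hqdx, smul_zero]
  have hq0 : ∀ y, 0 ≤ qfun G u y := fun y => inner_GLc_nonneg hGpd (u y)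
  have hqd1 : ContDiff ℝ 1 (qd G u) := by
    rw [← fderiv_qfun hGs hu]
    exact (contDiff_qfun hu).fderiv_right (by norm_num)
  have hcont : ContinuousOn (fun z => fderiv ℝ (qd G u) z) (Metric.closedBall x 1) :=
    (contDiff_zero.mp (hqd1.fderiv_right (by norm_num))).continuousOn
  obtain ⟨K0, hK0⟩ := (isCompact_closedBall x 1).exists_bound_of_continuousOn (f := fun z => fderiv ℝ (qd G u) z) hcont
  set K := max K0 0 with hK
  have hKnn : 0 ≤ K := le_max_right _ _
  have hqdlip : ∀ y ∈ Metric.closedBall x 1, ‖qd G u y‖ ≤ K * ‖y - x‖ := by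
    intro y hy
    have := Convex.norm_image_sub_le_of_norm_fderiv_le (𝕜 := ℝ) (C := K)
      (fun z _ => ((hqd1.differentiable one_ne_zero).differentiableAt :
          DifferentiableAt ℝ (qd G u) z))
      (fun z hz => le_trans (hK0 z hz) (le_max_left K0 0))
      (convex_closedBall x 1) (Metric.mem_closedBall_self zero_le_one) hy
    rwa [hqdx, sub_zero] at this
  have hqbound : ∀ y ∈ Metric.closedBall x 1, qfun G u y ≤ K * ‖y - x‖ ^ 2 := by
    intro y hy
    have hyx1 : ‖y - x‖ ≤ 1 := by rwa [← mem_closedBall_iff_norm]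
    have hsub : Metric.closedBall x ‖y - x‖ ⊆ Metric.closedBall x 1 :=
      Metric.closedBall_subset_closedBall hyx1
    have hder : ∀ z ∈ Metric.closedBall x ‖y - x‖,
        ‖fderiv ℝ (qfun G u) z‖ ≤ K * ‖y - x‖ := by
      intro z hz
      rw [fderiv_qfun hGs hu]
      refine le_trans (hqdlip z (hsub hz)) ?_
      have : ‖z - x‖ ≤ ‖y - x‖ := by rwa [← mem_closedBall_iff_norm]
      exact mul_le_mul_of_nonneg_left this hKnn
    have := Convex.norm_image_sub_le_of_norm_fderiv_le
      (fun z _ => (((contDiff_qfun hu).differentiable (by norm_num)).differentiableAt :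
          DifferentiableAt ℝ (qfun G u) z))
      hder (convex_closedBall x ‖y - x‖)
      (Metric.mem_closedBall_self (norm_nonneg _))
      (by rw [mem_closedBall_iff_norm])
    rw [hqx, sub_zero] at this
    calc qfun G u y ≤ ‖qfun G u y‖ := le_abs_self _
    _ ≤ K * ‖y - x‖ * ‖y - x‖ := this
    _ = K * ‖y - x‖ ^ 2 := by ring
  set C := (1 / 2 : ℝ) * K ^ (p / 2 - 1) * K with hC
  have hCnn : 0 ≤ C := by positivity
  have gbound : ∀ y ∈ Metric.closedBall x 1,
      ‖gfun G u p y‖ ≤ C * ‖y - x‖ ^ (p - 2) * ‖y - x‖ := by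
    intro y hy
    have h1 : ‖gfun G u p y‖ =
        1 / 2 * qfun G u y ^ (p / 2 - 1) * ‖qd G u y‖ := by
      rw [gfun, norm_smul (1 / 2 * qfun G u y ^ (p / 2 - 1)) (qd G u y), Real.norm_eq_abs,
        abs_of_nonneg (mul_nonneg (by norm_num) (Real.rpow_nonneg (hq0 y) _))]
    have h2 : qfun G u y ^ (p / 2 - 1) ≤ K ^ (p / 2 - 1) * ‖y - x‖ ^ (p - 2) := by
      calc qfun G u y ^ (p / 2 - 1) ≤ (K * ‖y - x‖ ^ 2) ^ (p / 2 - 1) :=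
            Real.rpow_le_rpow (hq0 y) (hqbound y hy) (by linarith)
      _ = K ^ (p / 2 - 1) * (‖y - x‖ ^ 2) ^ (p / 2 - 1) :=
            Real.mul_rpow hKnn (by positivity)
      _ = K ^ (p / 2 - 1) * ‖y - x‖ ^ (p - 2) := by
            rw [← Real.rpow_natCast ‖y - x‖ 2, ← Real.rpow_mul (norm_nonneg _)]
            congr 1
            push_cast
            ring
    calc ‖gfun G u p y‖ = 1 / 2 * qfun G u y ^ (p / 2 - 1) * ‖qd G u y‖ := h1
    _ ≤ 1 / 2 * (K ^ (p / 2 - 1) * ‖y - x‖ ^ (p - 2)) * (K * ‖y - x‖) := by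
        apply mul_le_mul
        · exact mul_le_mul_of_nonneg_left h2 (by norm_num)
        · exact hqdlip y hy
        · exact norm_nonneg _
        · positivity
    _ = C * ‖y - x‖ ^ (p - 2) * ‖y - x‖ := by rw [hC]; ring
  rw [hasFDerivAt_iff_isLittleO, Asymptotics.isLittleO_iff]
  intro c hc
  have h1 : Filter.Tendsto (fun y : EuclideanSpace ℝ (Fin n) => ‖y - x‖)
      (nhds x) (nhds 0) := by
    have hcn : Continuous (fun y : EuclideanSpace ℝ (Fin n) => ‖y - x‖) :=
      (continuous_id.sub continuous_const).norm
    have h := hcn.tendsto x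
    simpa using h
  have h2 : ContinuousAt (fun t : ℝ => t ^ (p - 2)) 0 :=
    Real.continuousAt_rpow_const 0 (p - 2) (Or.inr (by linarith))
  have h3 : Filter.Tendsto (fun y => C * ‖y - x‖ ^ (p - 2)) (nhds x) (nhds 0) := by
    have := (h2.tendsto.comp h1).const_mul C
    simpa [Real.zero_rpow (by linarith : p - 2 ≠ 0)] using this
  filter_upwards [h3.eventually (eventually_lt_nhds hc),
    Metric.closedBall_mem_nhds x zero_lt_one] with y hy1 hy2
  rw [hgx, sub_zero, ContinuousLinearMap.zero_apply, sub_zero]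
  calc ‖gfun G u p y‖ ≤ C * ‖y - x‖ ^ (p - 2) * ‖y - x‖ := gbound y hy2
  _ ≤ c * ‖y - x‖ := mul_le_mul_of_nonneg_right (le_of_lt hy1) (norm_nonneg _)

include hGs hu hp hf in
lemma second_fderiv_f_zero {x : EuclideanSpace ℝ (Fin n)} (hGpd : G.PosDef)
    (hqx : qfun G u x = 0) (hp2 : 2 < p) (h : EuclideanSpace ℝ (Fin n)) :
    iteratedFDeriv ℝ 2 f x ![h, h] = 0 := by
  rw [iteratedFDeriv_two_apply, fderiv_f hGs hu hp hf,
    (hasFDerivAt_gfun_zero hGs hu hGpd hqx hp2).fderiv]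
  simp


include hGs hu hp hf in
lemma gradient_f (x : EuclideanSpace ℝ (Fin n)) :
    gradient f x = (qfun G u x ^ (p / 2 - 1)) •
      (ContinuousLinearMap.adjoint (fderiv ℝ u x)) (GLc G (u x)) := by
  have hg : HasGradientAt f ((qfun G u x ^ (p / 2 - 1)) •
      (ContinuousLinearMap.adjoint (fderiv ℝ u x)) (GLc G (u x))) x := by
    rw [hasGradientAt_iff_hasFDerivAt]
    refine (hasFDerivAt_f hGs hu hp hf x).congr_fderiv ?_
    ext h
    rw [InnerProductSpace.toDual_apply_apply, gfun_apply, real_inner_smul_left,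
      ContinuousLinearMap.adjoint_inner_left]
  exact hg.gradient

include hGs hu hp hf in
lemma inner_gradient_f (x h : EuclideanSpace ℝ (Fin n)) :
    ⟪gradient f x, h⟫ = qfun G u x ^ (p / 2 - 1) * ⟪GLc G (u x), fderiv ℝ u x h⟫ := by
  rw [gradient_f hGs hu hp hf, real_inner_smul_left,
    ContinuousLinearMap.adjoint_inner_left]

lemma toEuclideanLin_inv_comp {G : Matrix (Fin d) (Fin d) ℝ} (hGpd : G.PosDef)
    (a : EuclideanSpace ℝ (Fin d)) :
    Matrix.toEuclideanLin G⁻¹ (Matrix.toEuclideanLin G a) = a := by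
  have hdet : IsUnit G.det := isUnit_iff_ne_zero.mpr hGpd.det_pos.ne'
  rw [Matrix.toEuclideanLin_apply, Matrix.toEuclideanLin_apply]
  simp [Matrix.mulVec_mulVec, Matrix.nonsing_inv_mul G hdet]

lemma rpow_sub_two_mul {t : ℝ} (ht : 0 ≤ t) (hp : 2 ≤ p) :
    t ^ (p - 2) * t = t ^ (p - 1) := by
  rcases eq_or_lt_of_le ht with h0 | h0
  · rw [← h0, mul_zero, Real.zero_rpow (by linarith : p - 1 ≠ 0)]
  · rw [show p - 1 = p - 2 + 1 by ring, Real.rpow_add_one h0.ne']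

include hGs hu hp hf in
lemma grad_lower (B : Matrix (Fin n) (Fin n) ℝ) (hGpd : G.PosDef)
    {μ : ℝ} (hμ : 0 < μ)
    (hyp : ∀ (x : EuclideanSpace ℝ (Fin n)) (w : EuclideanSpace ℝ (Fin d)),
      μ * ⟪w, Matrix.toEuclideanLin G⁻¹ w⟫
        ≤ ⟪ContinuousLinearMap.adjoint (fderiv ℝ u x) w,
            Matrix.toEuclideanLin B⁻¹
              (ContinuousLinearMap.adjoint (fderiv ℝ u x) w)⟫)
    (x : EuclideanSpace ℝ (Fin n)) :
    Real.sqrt μ * Real.sqrt (qfun G u x) ^ (p - 1) ≤ dualNormB B (gradient f x) := by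
  have hq0 : 0 ≤ qfun G u x := inner_GLc_nonneg hGpd (u x)
  rcases eq_or_lt_of_le hq0 with hq | hq
  · have hux : u x = 0 := inner_GLc_eq_zero hGpd hq.symm
    have : gradient f x = 0 := by
      rw [gradient_f hGs hu hp hf, hux]
      simp
    rw [this, ← hq, Real.sqrt_zero, Real.zero_rpow (by linarith : p - 1 ≠ 0),
      mul_zero, dualNormB]
    simp [Real.sqrt_nonneg]
  · set s := qfun G u x ^ (p / 2 - 1) with hs
    set w := GLc G (u x) with hw
    set v := (ContinuousLinearMap.adjoint (fderiv ℝ u x)) w with hv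
    have hgrad : gradient f x = s • v := gradient_f hGs hu hp hf x
    have hwG : ⟪w, Matrix.toEuclideanLin G⁻¹ w⟫ = qfun G u x := by
      rw [hw, GLc_apply, toEuclideanLin_inv_comp hGpd]
      exact GLc_symm hGs (u x) (u x)
    have hkey : μ * qfun G u x ≤ ⟪v, Matrix.toEuclideanLin B⁻¹ v⟫ := by
      rw [← hwG]; exact hyp x w
    have hsv : ⟪s • v, Matrix.toEuclideanLin B⁻¹ (s • v)⟫ =
        s ^ 2 * ⟪v, Matrix.toEuclideanLin B⁻¹ v⟫ := by
      rw [_root_.map_smul, real_inner_smul_left, real_inner_smul_right]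
      ring
    have hs2 : s ^ 2 = qfun G u x ^ (p - 2) := by
      rw [hs, ← Real.rpow_natCast (qfun G u x ^ (p / 2 - 1)) 2,
        ← Real.rpow_mul hq0]
      congr 1
      push_cast
      ring
    have hlow : μ * qfun G u x ^ (p - 1) ≤
        ⟪s • v, Matrix.toEuclideanLin B⁻¹ (s • v)⟫ := by
      rw [hsv, hs2]
      calc μ * qfun G u x ^ (p - 1)
          = qfun G u x ^ (p - 2) * (μ * qfun G u x) := by
            rw [← rpow_sub_two_mul hq0 hp]; ring
        _ ≤ qfun G u x ^ (p - 2) * ⟪v, Matrix.toEuclideanLin B⁻¹ v⟫ :=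
            mul_le_mul_of_nonneg_left hkey (Real.rpow_nonneg hq0 _)
    rw [dualNormB, hgrad]
    calc Real.sqrt μ * Real.sqrt (qfun G u x) ^ (p - 1)
        = Real.sqrt (μ * qfun G u x ^ (p - 1)) := by
          rw [Real.sqrt_mul hμ.le]
          congr 1
          rw [Real.sqrt_eq_rpow, Real.sqrt_eq_rpow, ← Real.rpow_mul hq0,
            ← Real.rpow_mul hq0]
          congr 1
          ring
      _ ≤ _ := Real.sqrt_le_sqrt hlow

end Aux

/-- Hessian approximation error bounds for `f(x) = (1/p)⟨G u(x), u(x)⟩^{p/2}` with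
the Gauss-Newton-plus-Fisher approximation
`H(x) = ‖u(x)‖^{p-2} ∇u(x)ᵀ G ∇u(x) + ((p-2)/‖u(x)‖^p) ∇f(x)∇f(x)ᵀ`,
expressed through quadratic forms. -/
theorem nonlinear_equations_hessian_approx {n d : ℕ}
    (B : Matrix (Fin n) (Fin n) ℝ) (hB : B.PosDef)
    (G : Matrix (Fin d) (Fin d) ℝ) (hG : G.PosDef) (hGsymm : G.IsSymm)
    (p : ℝ) (hp : 2 ≤ p)
    (u : EuclideanSpace ℝ (Fin n) → EuclideanSpace ℝ (Fin d))
    (hu : ContDiff ℝ 2 u)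
    (uNorm : EuclideanSpace ℝ (Fin n) → ℝ)
    (huNorm : uNorm = fun x => Real.sqrt ⟪u x, Matrix.toEuclideanLin G (u x)⟫)
    (f : EuclideanSpace ℝ (Fin n) → ℝ)
    (hf : f = fun x => 1 / p * ⟪u x, Matrix.toEuclideanLin G (u x)⟫ ^ (p / 2))
    (Hq : EuclideanSpace ℝ (Fin n) → EuclideanSpace ℝ (Fin n) → ℝ)
    (hHq : Hq = fun x h =>
      uNorm x ^ (p - 2) *
          ⟪fderiv ℝ u x h, Matrix.toEuclideanLin G (fderiv ℝ u x h)⟫ +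
        (p - 2) / uNorm x ^ p * ⟪gradient f x, h⟫ ^ 2)
    (ξ₁ : ℝ) (hξ₁ : 0 < ξ₁)
    (hsecond : ∀ (x h : EuclideanSpace ℝ (Fin n)),
      |⟪Matrix.toEuclideanLin G (u x), iteratedFDeriv ℝ 2 u x ![h, h]⟫|
        ≤ ξ₁ * uNorm x * normB B h ^ 2) :
    (∀ x h : EuclideanSpace ℝ (Fin n),
        |iteratedFDeriv ℝ 2 f x ![h, h] - Hq x h|
          ≤ ξ₁ * uNorm x ^ (p - 1) * normB B h ^ 2) ∧
      (∀ μ : ℝ, 0 < μ →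
        (∀ (x : EuclideanSpace ℝ (Fin n)) (w : EuclideanSpace ℝ (Fin d)),
          μ * ⟪w, Matrix.toEuclideanLin G⁻¹ w⟫
            ≤ ⟪ContinuousLinearMap.adjoint (fderiv ℝ u x) w,
                Matrix.toEuclideanLin B⁻¹
                  (ContinuousLinearMap.adjoint (fderiv ℝ u x) w)⟫) →
        ∀ x h : EuclideanSpace ℝ (Fin n),
          |iteratedFDeriv ℝ 2 f x ![h, h] - Hq x h|
            ≤ ξ₁ / Real.sqrt μ * dualNormB B (gradient f x) * normB B h ^ 2) := by
  have hf' : f = fun y => 1 / p * qfun G u y ^ (p / 2) := hf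
  have hq0 : ∀ x, 0 ≤ qfun G u x := fun x => inner_GLc_nonneg hG (u x)
  have huN : ∀ x, uNorm x = Real.sqrt (qfun G u x) := fun x => by rw [huNorm]; rfl
  have huNn : ∀ x, 0 ≤ uNorm x := fun x => (huN x) ▸ Real.sqrt_nonneg _
  have hsec' : ∀ x h, |⟪GLc G (u x), iteratedFDeriv ℝ 2 u x ![h, h]⟫|
      ≤ ξ₁ * uNorm x * normB B h ^ 2 := hsecond
  have part1 : ∀ x h : EuclideanSpace ℝ (Fin n),
      |iteratedFDeriv ℝ 2 f x ![h, h] - Hq x h|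
        ≤ ξ₁ * uNorm x ^ (p - 1) * normB B h ^ 2 := by
    intro x h
    by_cases hc : qfun G u x = 0 ∧ 2 < p
    · obtain ⟨hqx, hp2⟩ := hc
      have h2 := second_fderiv_f_zero hGsymm hu hp hf' hG hqx hp2 h
      have hu0 : uNorm x = 0 := by rw [huN, hqx, Real.sqrt_zero]
      have hHq0 : Hq x h = 0 := by
        rw [hHq]
        simp only [hu0]
        rw [Real.zero_rpow (by linarith : p - 2 ≠ 0),
          Real.zero_rpow (by linarith : p ≠ 0)]
        simp
      rw [h2, hHq0, hu0, sub_zero, abs_zero,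
        Real.zero_rpow (by linarith : p - 1 ≠ 0)]
      simp
    · have hA : 0 < qfun G u x ∨ p = 2 := by
        rcases eq_or_lt_of_le (hq0 x) with h0 | h0
        · right
          by_contra hne
          exact hc ⟨h0.symm, lt_of_le_of_ne hp (Ne.symm hne)⟩
        · left; exact h0
      have hNpow : uNorm x ^ (p - 2) = qfun G u x ^ (p / 2 - 1) := by
        rw [huN, Real.sqrt_eq_rpow, ← Real.rpow_mul (hq0 x)]
        congr 1; ring
      have hkey : iteratedFDeriv ℝ 2 f x ![h, h] - Hq x h =
          qfun G u x ^ (p / 2 - 1) *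
            ⟪GLc G (u x), iteratedFDeriv ℝ 2 u x ![h, h]⟫ := by
        rw [second_fderiv_f_apply hGsymm hu hp hf' hA h, hHq]
        dsimp only
        have hterm1 : uNorm x ^ (p - 2) *
            ⟪fderiv ℝ u x h, Matrix.toEuclideanLin G (fderiv ℝ u x h)⟫ =
            qfun G u x ^ (p / 2 - 1) *
              ⟪GLc G (fderiv ℝ u x h), fderiv ℝ u x h⟫ := by
          rw [hNpow, ← GLc_apply, real_inner_comm]
        have hterm2 : (p - 2) / uNorm x ^ p * ⟪gradient f x, h⟫ ^ 2 =
            (p - 2) * qfun G u x ^ (p / 2 - 2) *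
              ⟪GLc G (u x), fderiv ℝ u x h⟫ ^ 2 := by
          rcases hA with hqpos | hp2
          · have e1 : uNorm x ^ p = qfun G u x ^ (p / 2) := by
              rw [huN, Real.sqrt_eq_rpow, ← Real.rpow_mul (hq0 x)]
              congr 1; ring
            have e2 : ⟪gradient f x, h⟫ ^ 2 =
                qfun G u x ^ (p - 2) * ⟪GLc G (u x), fderiv ℝ u x h⟫ ^ 2 := by
              rw [inner_gradient_f hGsymm hu hp hf', mul_pow,
                ← Real.rpow_natCast (qfun G u x ^ (p / 2 - 1)) 2,
                ← Real.rpow_mul (hq0 x)]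
              congr 2
              push_cast; ring
            have e3 : qfun G u x ^ (p / 2 - 2) =
                qfun G u x ^ (p - 2) / qfun G u x ^ (p / 2) := by
              rw [← Real.rpow_sub hqpos]
              congr 1; ring
            rw [e1, e2, e3]
            field_simp
          · simp [hp2]
        rw [hterm1, hterm2]
        ring
      rw [hkey, abs_mul, abs_of_nonneg (Real.rpow_nonneg (hq0 x) _)]
      calc qfun G u x ^ (p / 2 - 1) *
            |⟪GLc G (u x), iteratedFDeriv ℝ 2 u x ![h, h]⟫|
          ≤ qfun G u x ^ (p / 2 - 1) * (ξ₁ * uNorm x * normB B h ^ 2) :=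
            mul_le_mul_of_nonneg_left (hsec' x h) (Real.rpow_nonneg (hq0 x) _)
        _ = ξ₁ * uNorm x ^ (p - 1) * normB B h ^ 2 := by
            rw [← hNpow, ← rpow_sub_two_mul (huNn x) hp]
            ring
  refine ⟨part1, ?_⟩
  intro μ hμ hyp x h
  refine le_trans (part1 x h) ?_
  have hd := grad_lower hGsymm hu hp hf' B hG hμ hyp x
  have hsqrtμ : 0 < Real.sqrt μ := Real.sqrt_pos.mpr hμ
  have hmain : ξ₁ * uNorm x ^ (p - 1) ≤
      ξ₁ / Real.sqrt μ * dualNormB B (gradient f x) := by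
    rw [huN]
    calc ξ₁ * Real.sqrt (qfun G u x) ^ (p - 1)
        = ξ₁ / Real.sqrt μ * (Real.sqrt μ * Real.sqrt (qfun G u x) ^ (p - 1)) := by
          field_simp
    _ ≤ ξ₁ / Real.sqrt μ * dualNormB B (gradient f x) :=
          mul_le_mul_of_nonneg_left hd (by positivity)
  exact mul_le_mul_of_nonneg_right hmain (sq_nonneg _)
end

section
/- Let γ₁ : ℝⁿ → (0,∞] be the Gradient-Normalized Smoothness of a differentiable f with respect to a matrix field H₁, i.e., for each x, ‖∇f(x+h) − ∇f(x) − H₁(x)h‖_* ≤ ‖∇f(x)‖_*‖h‖/γ₁(x) for all h in B_{γ₁(x)} ∩ O_x. Suppose H₂ is another matrix field with ‖H₁(x) − H₂(x)‖ ≤ ‖∇f(x)‖_* / γ₁₂(x) for some function γ₁₂ > 0. Then for γ := (γ₁(x)^{-1} + γ₁₂(x)^{-1})^{-1} ≤ γ₁(x), one has ‖∇f(x+h) − ∇f(x) − H₂(x)h‖_* ≤ ‖∇f(x)‖_*‖h‖/γ for all h in B_γ ∩ O_x. -/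
open Matrix
open scoped RealInnerProductSpace

lemma sqrt_quad_add_le {n : ℕ} {M : Matrix (Fin n) (Fin n) ℝ} (hM : M.PosSemidef)
    (a b : EuclideanSpace ℝ (Fin n)) :
    Real.sqrt ⟪a + b, Matrix.toEuclideanLin M (a + b)⟫
      ≤ Real.sqrt ⟪a, Matrix.toEuclideanLin M a⟫
        + Real.sqrt ⟪b, Matrix.toEuclideanLin M b⟫ := by
  obtain ⟨C, hC1, hC2⟩ : ∃ C : Matrix (Fin n) (Fin n) ℝ, C * C = M ∧ Cᴴ = C :=
    open scoped MatrixOrder in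
    ⟨CFC.sqrt M, CFC.sqrt_mul_sqrt_self M hM.nonneg, (CFC.sqrt_nonneg M).posSemidef.1⟩
  have key : ∀ s : EuclideanSpace ℝ (Fin n),
      ⟪s, Matrix.toEuclideanLin M s⟫ = ‖Matrix.toEuclideanLin C s‖ ^ 2 := by
    intro s
    have hco : Matrix.toEuclideanLin M s
        = Matrix.toEuclideanLin C (Matrix.toEuclideanLin C s) := by
      rw [← hC1]
      simp [Matrix.toEuclideanLin_apply, Matrix.mulVec_mulVec]
    have hadj : Matrix.toEuclideanLin C
        = LinearMap.adjoint (Matrix.toEuclideanLin C) := by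
      rw [← Matrix.toEuclideanLin_conjTranspose_eq_adjoint, hC2]
    rw [hco]
    calc ⟪s, Matrix.toEuclideanLin C (Matrix.toEuclideanLin C s)⟫
        = ⟪LinearMap.adjoint (Matrix.toEuclideanLin C) s,
            Matrix.toEuclideanLin C s⟫ := by rw [LinearMap.adjoint_inner_left]
      _ = ⟪Matrix.toEuclideanLin C s, Matrix.toEuclideanLin C s⟫ := by rw [← hadj]
      _ = ‖Matrix.toEuclideanLin C s‖ ^ 2 := real_inner_self_eq_norm_sq _
  rw [key, key, key, Real.sqrt_sq (norm_nonneg _), Real.sqrt_sq (norm_nonneg _),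
    Real.sqrt_sq (norm_nonneg _), map_add]
  exact norm_add_le _ _

theorem gradient_normalized_smoothness_hessian_perturbation {n : ℕ}
    (f : EuclideanSpace ℝ (Fin n) → ℝ) (hf : ContDiff ℝ 2 f)
    (B : Matrix (Fin n) (Fin n) ℝ) (hB : B.PosDef)
    (H₁ H₂ : Matrix (Fin n) (Fin n) ℝ)
    (x : EuclideanSpace ℝ (Fin n))
    (γ₁ γ₁₂ : ℝ) (hγ₁ : 0 < γ₁) (hγ₁₂ : 0 < γ₁₂)
    (hGNS : ∀ h : EuclideanSpace ℝ (Fin n),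
      normB B h ≤ γ₁ →
      ⟪fderiv ℝ (gradient f) x h, h⟫ + ⟪gradient f x, h⟫ ≤ 0 →
      dualNormB B (gradient f (x + h) - gradient f x - Matrix.toEuclideanLin H₁ h)
        ≤ dualNormB B (gradient f x) * normB B h / γ₁)
    (hpert : ∀ h : EuclideanSpace ℝ (Fin n),
      dualNormB B (Matrix.toEuclideanLin (H₁ - H₂) h)
        ≤ dualNormB B (gradient f x) / γ₁₂ * normB B h)
    (γ : ℝ) (hγ : γ = (γ₁⁻¹ + γ₁₂⁻¹)⁻¹) :
    γ ≤ γ₁ ∧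
      ∀ h : EuclideanSpace ℝ (Fin n),
        normB B h ≤ γ →
        ⟪fderiv ℝ (gradient f) x h, h⟫ + ⟪gradient f x, h⟫ ≤ 0 →
        dualNormB B (gradient f (x + h) - gradient f x - Matrix.toEuclideanLin H₂ h)
          ≤ dualNormB B (gradient f x) * normB B h / γ := by
  have hsum : 0 < γ₁⁻¹ + γ₁₂⁻¹ := by positivity
  have hγle : γ ≤ γ₁ := by
    rw [hγ]
    rw [inv_le_comm₀ hsum hγ₁]
    have h12 : 0 < γ₁₂⁻¹ := by positivity
    have h1 : 0 < γ₁⁻¹ := by positivity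
    linarith
  refine ⟨hγle, fun h hr hO => ?_⟩
  have hr₁ : normB B h ≤ γ₁ := hr.trans hγle
  have h1 := hGNS h hr₁ hO
  have h2 := hpert h
  set g := gradient f x with hg
  set gp := gradient f (x + h) with hgp
  have hdecomp : gp - g - Matrix.toEuclideanLin H₂ h
      = (gp - g - Matrix.toEuclideanLin H₁ h) + Matrix.toEuclideanLin (H₁ - H₂) h := by
    rw [map_sub]
    simp only [LinearMap.sub_apply]
    abel
  have htri : dualNormB B (gp - g - Matrix.toEuclideanLin H₂ h)
      ≤ dualNormB B (gp - g - Matrix.toEuclideanLin H₁ h)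
        + dualNormB B (Matrix.toEuclideanLin (H₁ - H₂) h) := by
    rw [hdecomp]
    exact sqrt_quad_add_le hB.inv.posSemidef _ _
  have hgnn : 0 ≤ dualNormB B g := Real.sqrt_nonneg _
  have hrnn : 0 ≤ normB B h := Real.sqrt_nonneg _
  calc dualNormB B (gp - g - Matrix.toEuclideanLin H₂ h)
      ≤ dualNormB B g * normB B h / γ₁ + dualNormB B g / γ₁₂ * normB B h :=
        htri.trans (add_le_add h1 h2)
    _ = dualNormB B g * normB B h * (γ₁⁻¹ + γ₁₂⁻¹) := by ring
    _ = dualNormB B g * normB B h / γ := by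
        rw [hγ]; field_simp
end

section
/- Let f, f₁, f₂ : ℝⁿ → ℝ with f = f₁ + f₂, and suppose for i = 1, 2 and a fixed x, g there exist γ_i > 0 such that ‖∇f_i(x+h) − ∇f_i(x) − H_i(x)h‖_* ≤ ‖g‖_*‖h‖/γ_i for all h with ‖h‖ ≤ γ_i and ⟨∇²f(x)h,h⟩ + ⟨g,h⟩ ≤ 0. Then with H := H₁ + H₂ and γ := (γ₁^{-1} + γ₂^{-1})^{-1}, the inequality ‖∇f(x+h) − ∇f(x) − H(x)h‖_* ≤ ‖g‖_*‖h‖/γ holds for all h with ‖h‖ ≤ γ and ⟨∇²f(x)h,h⟩ + ⟨g,h⟩ ≤ 0. -/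
open Matrix
open scoped RealInnerProductSpace

open scoped MatrixOrder in
lemma dualNormB_eq_norm {n : ℕ} {B : Matrix (Fin n) (Fin n) ℝ} (hB : B.PosDef)
    (s : EuclideanSpace ℝ (Fin n)) :
    dualNormB B s = ‖Matrix.toEuclideanLin (CFC.sqrt B⁻¹) s‖ := by
  set C := CFC.sqrt B⁻¹ with hC
  have hCherm : C.IsHermitian := (CFC.sqrt_nonneg B⁻¹).posSemidef.isHermitian
  have hTT : Matrix.toEuclideanLin (B⁻¹) =
      (Matrix.toEuclideanLin C).comp (Matrix.toEuclideanLin C) := by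
    ext v i
    rw [LinearMap.comp_apply, Matrix.toEuclideanLin_apply, Matrix.toEuclideanLin_apply,
      Matrix.toEuclideanLin_apply, WithLp.ofLp_toLp, WithLp.ofLp_toLp, WithLp.ofLp_toLp,
      Matrix.mulVec_mulVec,
      CFC.sqrt_mul_sqrt_self _ hB.inv.posSemidef.nonneg]
  have key : ⟪s, Matrix.toEuclideanLin B⁻¹ s⟫ =
      ⟪Matrix.toEuclideanLin C s, Matrix.toEuclideanLin C s⟫ := by
    rw [hTT]
    have := Matrix.toEuclideanLin_conjTranspose_eq_adjoint C
    rw [hCherm] at this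
    calc ⟪s, (Matrix.toEuclideanLin C).comp (Matrix.toEuclideanLin C) s⟫
        = ⟪s, LinearMap.adjoint (Matrix.toEuclideanLin C) (Matrix.toEuclideanLin C s)⟫ := by
          rw [← this]; rfl
      _ = ⟪Matrix.toEuclideanLin C s, Matrix.toEuclideanLin C s⟫ :=
          LinearMap.adjoint_inner_right _ _ _
  rw [dualNormB, key, real_inner_self_eq_norm_sq, Real.sqrt_sq (norm_nonneg _)]

lemma dualNormB_triangle {n : ℕ} {B : Matrix (Fin n) (Fin n) ℝ} (hB : B.PosDef)
    (a b : EuclideanSpace ℝ (Fin n)) :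
    dualNormB B (a + b) ≤ dualNormB B a + dualNormB B b := by
  simp only [dualNormB_eq_norm hB, map_add]
  exact norm_add_le _ _

theorem gradient_normalized_smoothness_sum {n : ℕ}
    (f f₁ f₂ : EuclideanSpace ℝ (Fin n) → ℝ)
    (hsum : f = f₁ + f₂)
    (hf₁ : Differentiable ℝ f₁) (hf₂ : Differentiable ℝ f₂)
    (hf : ContDiff ℝ 2 f)
    (B : Matrix (Fin n) (Fin n) ℝ) (hB : B.PosDef)
    (H₁ H₂ : Matrix (Fin n) (Fin n) ℝ)
    (x g : EuclideanSpace ℝ (Fin n))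
    (γ₁ γ₂ : ℝ) (hγ₁ : 0 < γ₁) (hγ₂ : 0 < γ₂)
    (hGNS₁ : ∀ h : EuclideanSpace ℝ (Fin n),
      normB B h ≤ γ₁ →
      ⟪fderiv ℝ (gradient f) x h, h⟫ + ⟪g, h⟫ ≤ 0 →
      dualNormB B (gradient f₁ (x + h) - gradient f₁ x - Matrix.toEuclideanLin H₁ h)
        ≤ dualNormB B g * normB B h / γ₁)
    (hGNS₂ : ∀ h : EuclideanSpace ℝ (Fin n),
      normB B h ≤ γ₂ →
      ⟪fderiv ℝ (gradient f) x h, h⟫ + ⟪g, h⟫ ≤ 0 →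
      dualNormB B (gradient f₂ (x + h) - gradient f₂ x - Matrix.toEuclideanLin H₂ h)
        ≤ dualNormB B g * normB B h / γ₂)
    (γ : ℝ) (hγ : γ = (γ₁⁻¹ + γ₂⁻¹)⁻¹) :
    ∀ h : EuclideanSpace ℝ (Fin n),
      normB B h ≤ γ →
      ⟪fderiv ℝ (gradient f) x h, h⟫ + ⟪g, h⟫ ≤ 0 →
      dualNormB B (gradient f (x + h) - gradient f x -
          Matrix.toEuclideanLin (H₁ + H₂) h)
        ≤ dualNormB B g * normB B h / γ := by
  have hγpos : 0 < γ := by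
    rw [hγ]; positivity
  have hγle₁ : γ ≤ γ₁ := by
    rw [hγ]
    rw [inv_le_comm₀ (by positivity) hγ₁]
    nlinarith [inv_pos.mpr hγ₂, inv_pos.mpr hγ₁]
  have hγle₂ : γ ≤ γ₂ := by
    rw [hγ]
    rw [inv_le_comm₀ (by positivity) hγ₂]
    nlinarith [inv_pos.mpr hγ₂, inv_pos.mpr hγ₁]
  have hgrad : ∀ y, gradient f y = gradient f₁ y + gradient f₂ y := by
    intro y
    have hfd : fderiv ℝ f y = fderiv ℝ f₁ y + fderiv ℝ f₂ y := by
      rw [hsum, show (f₁ + f₂) = fun z => f₁ z + f₂ z from rfl]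
      exact fderiv_add (hf₁ y) (hf₂ y)
    simp [gradient, hfd]
  intro h hle hcond
  have hdecomp : gradient f (x + h) - gradient f x - Matrix.toEuclideanLin (H₁ + H₂) h =
      (gradient f₁ (x + h) - gradient f₁ x - Matrix.toEuclideanLin H₁ h) +
      (gradient f₂ (x + h) - gradient f₂ x - Matrix.toEuclideanLin H₂ h) := by
    rw [hgrad (x + h), hgrad x, map_add, LinearMap.add_apply]
    abel
  have d1 := hGNS₁ h (hle.trans hγle₁) hcond
  have d2 := hGNS₂ h (hle.trans hγle₂) hcond
  have hg0 : 0 ≤ dualNormB B g := Real.sqrt_nonneg _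
  have hh0 : 0 ≤ normB B h := Real.sqrt_nonneg _
  calc dualNormB B (gradient f (x + h) - gradient f x - Matrix.toEuclideanLin (H₁ + H₂) h)
      ≤ dualNormB B (gradient f₁ (x + h) - gradient f₁ x - Matrix.toEuclideanLin H₁ h) +
        dualNormB B (gradient f₂ (x + h) - gradient f₂ x - Matrix.toEuclideanLin H₂ h) := by
        rw [hdecomp]; exact dualNormB_triangle hB _ _
    _ ≤ dualNormB B g * normB B h / γ₁ + dualNormB B g * normB B h / γ₂ := add_le_add d1 d2
    _ = dualNormB B g * normB B h / γ := by
        rw [hγ]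
        field_simp
end
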